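/- Let θ_c' be the unique real root of t³ + t² + 3t − 1 = 0. There exists θ_c ∈ (0.141, 0.142) with θ_c < θ_c' such that the number of solutions (x, y) with x, y > 0 of the boundary-law system x = (x² + θy² + θ²)/(θ²x² + θy² + 1), y = (θx² + y² + θ)/(θ²x² + θy² + 1) is: exactly one if θ > θ_c'; exactly three if θ = θ_c'; exactly five if θ_c < θ < θ_c'; exactly six if θ = θ_c; and exactly seven if 0 < θ < θ_c. -/

import Mathlib

/-- The set of positive solutions of the boundary-law system of the 3-state SOS model
on the binary tree with parameter `θ`. -/
def sosSolutionSet (θ : ℝ) : Set (ℝ × ℝ) :=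
  {p : ℝ × ℝ | 0 < p.1 ∧ 0 < p.2 ∧
    p.1 = (p.1 ^ 2 + θ * p.2 ^ 2 + θ ^ 2) / (θ ^ 2 * p.1 ^ 2 + θ * p.2 ^ 2 + 1) ∧
    p.2 = (θ * p.1 ^ 2 + p.2 ^ 2 + θ) / (θ ^ 2 * p.1 ^ 2 + θ * p.2 ^ 2 + 1)}

/-- cubic for the x = 1 branch -/
def sosC (θ y : ℝ) : ℝ := θ*y^3 - y^2 + (θ^2+1)*y - 2*θ

/-- quartic for the x ≠ 1 branch -/
def sosQ (θ x : ℝ) : ℝ := θ^3*x^4 + (3*θ^3-θ)*x^3 + (4*θ^3-2*θ+1)*x^2 + (3*θ^3-θ)*x + θ^3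

/-- minus the discriminant of the cubic -/
def sosP (θ : ℝ) : ℝ := 4*θ^7+12*θ^5+71*θ^4+12*θ^3-38*θ^2+12*θ-1

def sosG (t : ℝ) : ℝ := t^3+t^2+3*t-1

def sosCset (θ : ℝ) : Set ℝ := {y | 0 < y ∧ sosC θ y = 0}
def sosQset (θ : ℝ) : Set ℝ := {x | 0 < x ∧ sosQ θ x = 0}

lemma sosQ_one_pos {θ : ℝ} (hθ : 0 < θ) : 0 < 12*θ^3 - 4*θ + 1 := by
  nlinarith [mul_nonneg (sq_nonneg (3*θ-1)) hθ.le, sq_nonneg (3*θ-1)]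

lemma sos_decomp {θ : ℝ} (hθ : 0 < θ) :
    sosSolutionSet θ = (fun y => ((1:ℝ), y)) '' (sosCset θ) ∪
      (fun x => (x, x/(θ*(x+1)))) '' (sosQset θ) := by
  ext ⟨x, y⟩
  simp only [sosSolutionSet, Set.mem_setOf_eq, Set.mem_union, Set.mem_image, sosCset, sosQset,
    Prod.mk.injEq]
  constructor
  · rintro ⟨hx, hy, e1, e2⟩
    have hd : 0 < θ^2*x^2 + θ*y^2 + 1 := by positivity
    rw [eq_div_iff hd.ne'] at e1 e2
    have hfac : (x - 1) * (θ^2*(x^2+x+1) + θ*y^2 - x) = 0 := by linear_combination e1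
    rcases mul_eq_zero.1 hfac with h1 | hF
    · have hx1 : x = 1 := by linarith [sub_eq_zero.1 h1]
      subst hx1
      have hCy : sosC θ y = 0 := by unfold sosC; linear_combination e2
      left; exact ⟨y, ⟨hy, hCy⟩, rfl, rfl⟩
    · -- second factor zero
      have hdenom : θ^2*x^2 + θ*y^2 + 1 = (1-θ^2)*(x+1) := by linear_combination hF
      have hθ2 : 0 < 1 - θ^2 := by
        have : 0 < (1-θ^2)*(x+1) := hdenom ▸ hd
        nlinarith
      have hy' : y * (θ*(x+1)) = x := by
        have h2 : θ*(y * ((1-θ^2)*(x+1))) = θ*(θ*x^2 + y^2 + θ) := by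
          rw [← hdenom]; linear_combination θ * e2
        have h3 : θ*(θ*x^2 + y^2 + θ) = x*(1-θ^2) := by linear_combination hF
        have h4 : (1-θ^2) * (y * (θ*(x+1))) = (1-θ^2) * x := by linear_combination h2 + h3
        exact mul_left_cancel₀ hθ2.ne' h4
      have hQ : sosQ θ x = 0 := by
        unfold sosQ
        have hy'' : x - θ*(x+1)*y = 0 := by linear_combination -hy'
        linear_combination (θ*(x+1)^2) * hF + (x + θ*(x+1)*y) * hy''
      right
      refine ⟨x, ⟨hx, hQ⟩, rfl, ?_⟩
      field_simp
      linear_combination -hy'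
  · rintro (⟨y', ⟨hy', hC⟩, hx1, hyy⟩ | ⟨t, ⟨hx', hQ⟩, hxx, hyy⟩)
    · subst hyy; subst hx1
      have hd : 0 < θ^2*(1:ℝ)^2 + θ*y'^2 + 1 := by positivity
      refine ⟨one_pos, hy', ?_, ?_⟩
      · rw [eq_div_iff (by simpa using hd.ne')]; ring
      · rw [eq_div_iff (by simpa using hd.ne')]
        unfold sosC at hC; linear_combination hC
    · subst hxx; subst hyy
      have hx1 : 0 < t + 1 := by linarith
      have hypos : 0 < t/(θ*(t+1)) := by positivity
      have hF : θ^2*(t^2+t+1) + θ*(t/(θ*(t+1)))^2 - t = 0 := by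
        have hne : θ*(t+1) ≠ 0 := by positivity
        field_simp
        unfold sosQ at hQ
        linear_combination hQ
      have hd : 0 < θ^2*t^2 + θ*(t/(θ*(t+1)))^2 + 1 := by positivity
      refine ⟨hx', hypos, ?_, ?_⟩
      · rw [eq_div_iff hd.ne']; linear_combination (t-1) * hF
      · rw [eq_div_iff hd.ne']
        set y := t/(θ*(t+1)) with hy
        have hy' : y * (θ*(t+1)) = t := by
          rw [hy]; field_simp
        have goal' : θ*(y * (θ^2*t^2 + θ*y^2 + 1)) = θ*(θ*t^2 + y^2 + θ) := by
          linear_combination (1-θ^2) * hy' + (θ*y - 1) * hF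
        exact mul_left_cancel₀ hθ.ne' goal'

lemma sos_ncard {θ : ℝ} (hθ : 0 < θ) (hCf : (sosCset θ).Finite) (hQf : (sosQset θ).Finite) :
    (sosSolutionSet θ).ncard = (sosCset θ).ncard + (sosQset θ).ncard := by
  rw [sos_decomp hθ]
  have injA : Set.InjOn (fun y => ((1:ℝ), y)) (sosCset θ) := by
    intro a _ b _ h; simpa using h
  have injB : Set.InjOn (fun x : ℝ => (x, x/(θ*(x+1)))) (sosQset θ) := by
    intro a _ b _ h
    have := congrArg Prod.fst h; simpa using this
  have hdisj : Disjoint ((fun y => ((1:ℝ), y)) '' (sosCset θ))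
      ((fun x : ℝ => (x, x/(θ*(x+1)))) '' (sosQset θ)) := by
    rw [Set.disjoint_left]
    rintro ⟨px, py⟩ ⟨ya, ⟨_, _⟩, ha⟩ ⟨xb, ⟨hxb, hQb⟩, hb⟩
    simp only [Prod.mk.injEq] at ha hb
    have hxb1 : xb = 1 := by rw [hb.1, ← ha.1]
    rw [hxb1] at hQb
    have h3 : sosQ θ 1 = 12*θ^3 - 4*θ + 1 := by unfold sosQ; ring
    nlinarith [sosQ_one_pos hθ]
  rw [Set.ncard_union_eq hdisj (hCf.image _) (hQf.image _),
    Set.ncard_image_of_injOn injA, Set.ncard_image_of_injOn injB]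

section Cubic

variable {θ y1 y2 : ℝ}

lemma mul_nonneg_of_nonpos_nonpos {a b : ℝ} (ha : a ≤ 0) (hb : b ≤ 0) : 0 ≤ a * b := by
  nlinarith

lemma sosC_cont (θ : ℝ) : Continuous (sosC θ) := by
  unfold sosC; fun_prop

lemma sosC_root_pos (hθ : 0 < θ) {y : ℝ} (hy : sosC θ y = 0) : 0 < y := by
  by_contra h
  push_neg at h
  have h3 : y^3 ≤ 0 := by
    calc y^3 = y * y^2 := by ring
    _ ≤ 0 := mul_nonpos_of_nonpos_of_nonneg h (sq_nonneg y)
  have hlt : sosC θ y < 0 := by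
    unfold sosC
    nlinarith [mul_nonpos_of_nonneg_of_nonpos hθ.le h3, sq_nonneg y,
      mul_nonpos_of_nonneg_of_nonpos (le_of_lt (by positivity : (0:ℝ) < θ^2+1)) h]
  rw [hy] at hlt; exact lt_irrefl 0 hlt

lemma sosC_zero (hθ : 0 < θ) : sosC θ 0 < 0 := by unfold sosC; nlinarith

lemma sosC_big (hθ : 0 < θ) : 0 < sosC θ (1/θ + 2) := by
  have h : sosC θ (1/θ + 2) = 3/θ + 2*θ^2 + 7*θ + 10 := by
    unfold sosC; field_simp; ring
  rw [h]; positivity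

/-- divided-difference identity -/
lemma sosC_dd (θ a b : ℝ) :
    sosC θ b - sosC θ a = (b-a)*(θ*(a^2+a*b+b^2) - (a+b) + (θ^2+1)) := by
  unfold sosC; ring

lemma sosC_bracket (hθ : 0 < θ) (hsum : 3*θ*(y1+y2) = 2) (hprod : 3*θ*(y1*y2) = θ^2+1)
    (a b : ℝ) :
    θ*(a^2+a*b+b^2) - (a+b) + (θ^2+1)
      = θ*((y1-a)*(y2-a) + (y1-b)*(y2-b) + ((y1-a)*(y2-b)+(y1-b)*(y2-a))/2) := by
  linear_combination ((a+b)/2)*hsum - hprod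

lemma sosC_mono_left (hθ : 0 < θ) (hsum : 3*θ*(y1+y2) = 2) (hprod : 3*θ*(y1*y2) = θ^2+1)
    (h12 : y1 < y2) {a b : ℝ} (hab : a < b) (hb : b ≤ y1) : sosC θ a < sosC θ b := by
  have hB := sosC_bracket hθ hsum hprod a b
  have p1 : 0 < (y1-a)*(y2-a) := mul_pos (by linarith) (by linarith)
  have p2 : 0 ≤ (y1-b)*(y2-b) := mul_nonneg (by linarith) (by linarith)
  have p3 : 0 ≤ (y1-a)*(y2-b) := mul_nonneg (by linarith) (by linarith)
  have p4 : 0 ≤ (y1-b)*(y2-a) := mul_nonneg (by linarith) (by linarith)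
  have hBpos : 0 < θ*(a^2+a*b+b^2) - (a+b) + (θ^2+1) := by
    rw [hB]; nlinarith
  nlinarith [sosC_dd θ a b, mul_pos (sub_pos.2 hab) hBpos]

lemma sosC_mono_right (hθ : 0 < θ) (hsum : 3*θ*(y1+y2) = 2) (hprod : 3*θ*(y1*y2) = θ^2+1)
    (h12 : y1 < y2) {a b : ℝ} (ha : y2 ≤ a) (hab : a < b) : sosC θ a < sosC θ b := by
  have hB := sosC_bracket hθ hsum hprod a b
  have p1 : 0 ≤ (y1-a)*(y2-a) := mul_nonneg_of_nonpos_nonpos (by linarith : _ ≤ (0:ℝ)) (by linarith)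
  have p2 : 0 < (y1-b)*(y2-b) := mul_pos_of_neg_of_neg (by linarith) (by linarith)
  have p3 : 0 ≤ (y1-a)*(y2-b) := mul_nonneg_of_nonpos_nonpos (by linarith : _ ≤ (0:ℝ)) (by linarith)
  have p4 : 0 ≤ (y1-b)*(y2-a) := mul_nonneg_of_nonpos_nonpos (by linarith : _ ≤ (0:ℝ)) (by linarith)
  have hBpos : 0 < θ*(a^2+a*b+b^2) - (a+b) + (θ^2+1) := by
    rw [hB]; nlinarith
  nlinarith [sosC_dd θ a b, mul_pos (sub_pos.2 hab) hBpos]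

lemma sosC_mono_mid (hθ : 0 < θ) (hsum : 3*θ*(y1+y2) = 2) (hprod : 3*θ*(y1*y2) = θ^2+1)
    {a b : ℝ} (ha : y1 ≤ a) (hab : a < b) (hb : b ≤ y2) : sosC θ b < sosC θ a := by
  have hB := sosC_bracket hθ hsum hprod a b
  have p1 : 0 ≤ (a-y1)*(y2-a) := mul_nonneg (by linarith) (by linarith)
  have p2 : 0 ≤ (b-y1)*(y2-b) := mul_nonneg (by linarith) (by linarith)
  have p3 : 0 ≤ (a-y1)*(y2-b) := mul_nonneg (by linarith) (by linarith)
  have p4 : 0 < (b-y1)*(y2-a) := mul_pos (by linarith) (by linarith)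
  have hBneg : θ*(a^2+a*b+b^2) - (a+b) + (θ^2+1) < 0 := by
    rw [hB]; nlinarith
  nlinarith [sosC_dd θ a b, mul_pos (sub_pos.2 hab) (neg_pos.2 hBneg)]

/-- strict monotonicity everywhere when the derivative has no real root -/
lemma sosC_mono_all (hθ : 0 < θ) (hu : 1 - 3*θ - 3*θ^3 ≤ 0) {a b : ℝ} (hab : a < b) :
    sosC θ a < sosC θ b := by
  have hne : (a-b)^2 > 0 := by
    have : a - b ≠ 0 := sub_ne_zero.2 hab.ne
    positivity
  have hBpos : 0 < θ*(a^2+a*b+b^2) - (a+b) + (θ^2+1) := by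
    nlinarith [sq_nonneg (3*θ*(a+b)-2), mul_pos (mul_pos hθ hθ) hne, hu, hθ]
  nlinarith [sosC_dd θ a b, mul_pos (sub_pos.2 hab) hBpos]

end Cubic

section CubicCount

variable {θ : ℝ}

lemma sosC_expand (hθ : 0 < θ) (t : ℝ) :
    sosC θ (t/(3*θ)) = (θ*t^3 - 3*θ*t^2 + 9*θ^2*(θ^2+1)*t - 54*θ^4)/(27*θ^3) := by
  unfold sosC; field_simp; ring

lemma sosC_setup (hθ : 0 < θ) (hu : 0 < 1 - 3*θ - 3*θ^3) :
    ∃ y1 y2 : ℝ, 0 < y1 ∧ y1 < y2 ∧ 3*θ*(y1+y2) = 2 ∧ 3*θ*(y1*y2) = θ^2+1 ∧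
      y2 < 1/θ + 2 ∧ sosC θ y1 * sosC θ y2 * (27*θ^2) = sosP θ := by
  set s := Real.sqrt (1 - 3*θ - 3*θ^3) with hs
  have hs2 : s^2 = 1 - 3*θ - 3*θ^3 := Real.sq_sqrt hu.le
  have hspos : 0 < s := Real.sqrt_pos.2 hu
  have hslt1 : s < 1 := by nlinarith [hs2, hspos, pow_pos hθ 3, hθ]
  refine ⟨(1-s)/(3*θ), (1+s)/(3*θ), ?_, ?_, ?_, ?_, ?_, ?_⟩
  · exact div_pos (by linarith) (by positivity)
  · rw [div_lt_div_iff_of_pos_right (by positivity)]; linarith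
  · field_simp; ring
  · field_simp; linear_combination -hs2
  · rw [div_lt_iff₀ (by positivity)]
    have hexp : (1/θ+2)*(3*θ) = 3 + 6*θ := by field_simp; ring
    rw [hexp]; linarith
  · rw [sosC_expand hθ, sosC_expand hθ, div_mul_div_comm, div_mul_eq_mul_div,
      div_eq_iff (by positivity)]
    unfold sosP
    linear_combination (-108*θ^4 + 135*θ^4*s^2 - 27*θ^4*s^4 + 648*θ^5 - 405*θ^5*s^2
      - 972*θ^6 + 648*θ^7 - 405*θ^7*s^2 - 1944*θ^8 - 972*θ^10) * hs2

end CubicCount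

section CubicSets

variable {θ : ℝ}

lemma sosC_ivt (hθ : 0 < θ) {a b : ℝ} (hab : a ≤ b) (ha : sosC θ a < 0) (hb : 0 < sosC θ b) :
    ∃ r ∈ Set.Ioo a b, sosC θ r = 0 := by
  have h : (0:ℝ) ∈ sosC θ '' Set.Ioo a b :=
    intermediate_value_Ioo hab (sosC_cont θ).continuousOn ⟨ha, hb⟩
  obtain ⟨r, hr, hr0⟩ := h
  exact ⟨r, hr, hr0⟩

lemma sosC_ivt' (hθ : 0 < θ) {a b : ℝ} (hab : a ≤ b) (ha : 0 < sosC θ a) (hb : sosC θ b < 0) :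
    ∃ r ∈ Set.Ioo a b, sosC θ r = 0 := by
  have h : (0:ℝ) ∈ sosC θ '' Set.Ioo a b :=
    intermediate_value_Ioo' hab (sosC_cont θ).continuousOn ⟨hb, ha⟩
  obtain ⟨r, hr, hr0⟩ := h
  exact ⟨r, hr, hr0⟩

lemma sosCset_card_one (hθ : 0 < θ) (hP : 0 < sosP θ) : ∃ r, sosCset θ = {r} := by
  have hC0 := sosC_zero hθ
  have hCT := sosC_big hθ
  by_cases hu : 1 - 3*θ - 3*θ^3 ≤ 0
  · obtain ⟨r, hrIoo, hr0⟩ := sosC_ivt hθ (by positivity) hC0 hCT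
    refine ⟨r, ?_⟩
    ext y
    simp only [sosCset, Set.mem_setOf_eq, Set.mem_singleton_iff]
    constructor
    · rintro ⟨hy, hCy⟩
      rcases lt_trichotomy y r with h | h | h
      · exact absurd (hr0 ▸ sosC_mono_all hθ hu h) (by rw [hCy]; simp)
      · exact h
      · exact absurd (hCy ▸ sosC_mono_all hθ hu h) (by rw [hr0]; simp)
    · rintro rfl; exact ⟨hrIoo.1, hr0⟩
  · push_neg at hu
    obtain ⟨y1, y2, hy1, h12, hsum, hprod, hy2T, key⟩ := sosC_setup hθ hu
    have hC21 : sosC θ y2 < sosC θ y1 := sosC_mono_mid hθ hsum hprod le_rfl h12 le_rfl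
    have hprodpos : 0 < sosC θ y1 * sosC θ y2 := by nlinarith [key, hP, sq_nonneg θ]
    rcases lt_trichotomy (sosC θ y2) 0 with h2 | h2 | h2
    · have h1 : sosC θ y1 < 0 := by nlinarith
      obtain ⟨r, hrIoo, hr0⟩ := sosC_ivt hθ (by linarith) h2 hCT
      refine ⟨r, ?_⟩
      ext y
      simp only [sosCset, Set.mem_setOf_eq, Set.mem_singleton_iff]
      constructor
      · rintro ⟨hy, hCy⟩
        have hygt : y2 < y := by
          by_contra hle
          push_neg at hle
          rcases lt_trichotomy y y1 with h' | h' | h'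
          · have := sosC_mono_left hθ hsum hprod h12 h' le_rfl; rw [hCy] at this; linarith
          · rw [h'] at hCy; linarith
          · have := sosC_mono_mid hθ hsum hprod le_rfl h' hle; rw [hCy] at this; linarith
        rcases lt_trichotomy y r with h' | h' | h'
        · have := sosC_mono_right hθ hsum hprod h12 hygt.le h'
          rw [hCy, hr0] at this; linarith
        · exact h'
        · have := sosC_mono_right hθ hsum hprod h12 hrIoo.1.le h'
          rw [hCy, hr0] at this; linarith
      · rintro rfl; exact ⟨by linarith [hrIoo.1], hr0⟩
    · exfalso; rw [h2] at hprodpos; simp at hprodpos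
    · have h1 : 0 < sosC θ y1 := lt_trans h2 hC21
      obtain ⟨r, hrIoo, hr0⟩ := sosC_ivt hθ hy1.le hC0 h1
      refine ⟨r, ?_⟩
      ext y
      simp only [sosCset, Set.mem_setOf_eq, Set.mem_singleton_iff]
      constructor
      · rintro ⟨hy, hCy⟩
        have hylt : y < y1 := by
          by_contra hle
          push_neg at hle
          rcases lt_trichotomy y y2 with h' | h' | h'
          · rcases eq_or_lt_of_le hle with h'' | h''
            · rw [← h''] at hCy; linarith
            · have := sosC_mono_mid hθ hsum hprod hle h' le_rfl
              rw [hCy] at this; linarith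
          · rw [h'] at hCy; linarith
          · have := sosC_mono_right hθ hsum hprod h12 le_rfl h'; rw [hCy] at this; linarith
        rcases lt_trichotomy y r with h' | h' | h'
        · have := sosC_mono_left hθ hsum hprod h12 h' hrIoo.2.le
          rw [hCy, hr0] at this; linarith
        · exact h'
        · have := sosC_mono_left hθ hsum hprod h12 h' hylt.le
          rw [hCy, hr0] at this; linarith
      · rintro rfl; exact ⟨hrIoo.1, hr0⟩

end CubicSets

section CubicSets2

variable {θ : ℝ}

lemma sosC_upos (hθ : 0 < θ) (h142 : θ ≤ 0.142) : 0 < 1 - 3*θ - 3*θ^3 := by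
  nlinarith [pow_le_pow_left₀ hθ.le h142 3]

lemma sosCset_card_two (hθ : 0 < θ) (h142 : θ ≤ 0.142) (hP : sosP θ = 0) :
    ∃ r1 r2, r1 ≠ r2 ∧ sosCset θ = {r1, r2} := by
  have hC0 := sosC_zero hθ
  have hCT := sosC_big hθ
  obtain ⟨y1, y2, hy1, h12, hsum, hprod, hy2T, key⟩ := sosC_setup hθ (sosC_upos hθ h142)
  have hC21 : sosC θ y2 < sosC θ y1 := sosC_mono_mid hθ hsum hprod le_rfl h12 le_rfl
  have hprod0 : sosC θ y1 * sosC θ y2 = 0 := by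
    rw [hP] at key
    rcases mul_eq_zero.1 key with h | h
    · exact h
    · exact absurd h (by positivity)
  rcases mul_eq_zero.1 hprod0 with h1 | h2
  · -- double root at y1, simple root beyond y2
    have h2 : sosC θ y2 < 0 := by rw [← h1]; exact hC21
    obtain ⟨r, hrIoo, hr0⟩ := sosC_ivt hθ (by linarith) h2 hCT
    refine ⟨y1, r, by intro h; rw [h] at h12; linarith [hrIoo.1], ?_⟩
    ext y
    simp only [sosCset, Set.mem_setOf_eq, Set.mem_insert_iff, Set.mem_singleton_iff]
    constructor
    · rintro ⟨hy, hCy⟩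
      rcases lt_trichotomy y y1 with h' | h' | h'
      · have := sosC_mono_left hθ hsum hprod h12 h' le_rfl
        rw [hCy, h1] at this; linarith
      · exact Or.inl h'
      · rcases le_or_gt y y2 with h'' | h''
        · have := sosC_mono_mid hθ hsum hprod le_rfl h' h''
          rw [hCy, h1] at this; linarith
        · right
          rcases lt_trichotomy y r with h3 | h3 | h3
          · have := sosC_mono_right hθ hsum hprod h12 h''.le h3
            rw [hCy, hr0] at this; linarith
          · exact h3
          · have := sosC_mono_right hθ hsum hprod h12 hrIoo.1.le h3
            rw [hCy, hr0] at this; linarith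
    · rintro (rfl | rfl)
      · exact ⟨hy1, h1⟩
      · exact ⟨by linarith [hrIoo.1], hr0⟩
  · -- simple root below y1, double root at y2
    have h1 : 0 < sosC θ y1 := h2 ▸ hC21
    obtain ⟨r, hrIoo, hr0⟩ := sosC_ivt hθ hy1.le hC0 h1
    refine ⟨r, y2, by intro h; rw [h] at hrIoo; linarith [hrIoo.2], ?_⟩
    ext y
    simp only [sosCset, Set.mem_setOf_eq, Set.mem_insert_iff, Set.mem_singleton_iff]
    constructor
    · rintro ⟨hy, hCy⟩
      rcases lt_trichotomy y y1 with h' | h' | h'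
      · left
        rcases lt_trichotomy y r with h3 | h3 | h3
        · have := sosC_mono_left hθ hsum hprod h12 h3 hrIoo.2.le
          rw [hCy, hr0] at this; linarith
        · exact h3
        · have := sosC_mono_left hθ hsum hprod h12 h3 h'.le
          rw [hCy, hr0] at this; linarith
      · rw [← h'] at h1; rw [hCy] at h1; linarith
      · rcases lt_trichotomy y y2 with h'' | h'' | h''
        · have := sosC_mono_mid hθ hsum hprod h'.le h'' le_rfl
          rw [hCy, h2] at this; linarith
        · exact Or.inr h''
        · have := sosC_mono_right hθ hsum hprod h12 le_rfl h''
          rw [hCy, h2] at this; linarith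
    · rintro (rfl | rfl)
      · exact ⟨hrIoo.1, hr0⟩
      · exact ⟨by linarith, h2⟩

end CubicSets2

section CubicSets3

variable {θ : ℝ}

lemma sosCset_card_three (hθ : 0 < θ) (h142 : θ ≤ 0.142) (hP : sosP θ < 0) :
    ∃ r1 r2 r3, r1 ≠ r2 ∧ r1 ≠ r3 ∧ r2 ≠ r3 ∧ sosCset θ = {r1, r2, r3} := by
  have hC0 := sosC_zero hθ
  have hCT := sosC_big hθ
  obtain ⟨y1, y2, hy1, h12, hsum, hprod, hy2T, key⟩ := sosC_setup hθ (sosC_upos hθ h142)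
  have hC21 : sosC θ y2 < sosC θ y1 := sosC_mono_mid hθ hsum hprod le_rfl h12 le_rfl
  have hprodneg : sosC θ y1 * sosC θ y2 < 0 := by nlinarith [key, hP, sq_nonneg θ]
  have h1 : 0 < sosC θ y1 := by nlinarith
  have h2 : sosC θ y2 < 0 := by nlinarith
  obtain ⟨r1, hr1, hr10⟩ := sosC_ivt hθ hy1.le hC0 h1
  obtain ⟨r2, hr2, hr20⟩ := sosC_ivt' hθ h12.le h1 h2
  obtain ⟨r3, hr3, hr30⟩ := sosC_ivt hθ (by linarith) h2 hCT
  refine ⟨r1, r2, r3, by intro h; rw [h] at hr1; linarith [hr1.2, hr2.1],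
    by intro h; rw [h] at hr1; linarith [hr1.2, hr3.1],
    by intro h; rw [h] at hr2; linarith [hr2.2, hr3.1], ?_⟩
  ext y
  simp only [sosCset, Set.mem_setOf_eq, Set.mem_insert_iff, Set.mem_singleton_iff]
  constructor
  · rintro ⟨hy, hCy⟩
    rcases lt_trichotomy y y1 with h' | h' | h'
    · left
      rcases lt_trichotomy y r1 with h3 | h3 | h3
      · have := sosC_mono_left hθ hsum hprod h12 h3 hr1.2.le
        rw [hCy, hr10] at this; linarith
      · exact h3
      · have := sosC_mono_left hθ hsum hprod h12 h3 h'.le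
        rw [hCy, hr10] at this; linarith
    · rw [h'] at hCy; rw [hCy] at h1; linarith
    · rcases lt_trichotomy y y2 with h'' | h'' | h''
      · right; left
        rcases lt_trichotomy y r2 with h3 | h3 | h3
        · have := sosC_mono_mid hθ hsum hprod h'.le h3 hr2.2.le
          rw [hCy, hr20] at this; linarith
        · exact h3
        · have := sosC_mono_mid hθ hsum hprod hr2.1.le h3 h''.le
          rw [hCy, hr20] at this; linarith
      · rw [h''] at hCy; rw [hCy] at h2; linarith
      · right; right
        rcases lt_trichotomy y r3 with h3 | h3 | h3
        · have := sosC_mono_right hθ hsum hprod h12 h''.le h3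
          rw [hCy, hr30] at this; linarith
        · exact h3
        · have := sosC_mono_right hθ hsum hprod h12 hr3.1.le h3
          rw [hCy, hr30] at this; linarith
  · rintro (rfl | rfl | rfl)
    · exact ⟨hr1.1, hr10⟩
    · exact ⟨by linarith [hr2.1], hr20⟩
    · exact ⟨by linarith [hr3.1], hr30⟩

end CubicSets3

section Quartic

variable {θ : ℝ}

lemma sosG_mono {a b : ℝ} (hab : a < b) : sosG a < sosG b := by
  have key : sosG b - sosG a = (b-a)*(a^2+a*b+b^2+a+b+3) := by unfold sosG; ring
  have hbr : 0 < a^2+a*b+b^2+a+b+3 := by nlinarith [sq_nonneg (a+b), sq_nonneg (a-b), sq_nonneg (3*(a+b)+2)]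
  nlinarith [mul_pos (sub_pos.2 hab) hbr]

lemma sosG_lt3 (hg : sosG θ ≤ 0) : θ < 0.3 := by
  by_contra h
  push_neg at h
  have h3 : (0:ℝ) < sosG 0.3 := by norm_num [sosG]
  rcases eq_or_lt_of_le h with h' | h'
  · rw [h'] at h3; linarith
  · linarith [sosG_mono h']

/-- no solutions of the quartic branch above θ_c' -/
lemma sosQset_empty (hθ : 0 < θ) (hg : 0 < sosG θ) : sosQset θ = ∅ := by
  ext x
  simp only [sosQset, Set.mem_setOf_eq, Set.mem_empty_iff_false, iff_false, not_and]
  intro hx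
  rcases le_or_gt (θ*1) (7*θ^3) with h7 | h7
  · -- θ² ≥ 1/7
    have hid : sosQ θ x = (12*θ^3-4*θ+1)*x^2 + (x-1)^2*(θ^3*x^2+(5*θ^3-θ)*x+θ^3) := by
      unfold sosQ; ring
    have h2 : 0 ≤ θ^3*x^2+(5*θ^3-θ)*x+θ^3 := by nlinarith [sq_nonneg (x-1), mul_pos hθ hx]
    have h3 : 0 < (12*θ^3-4*θ+1)*x^2 := mul_pos (sosQ_one_pos hθ) (by positivity)
    have : 0 < sosQ θ x := by rw [hid]; nlinarith [sq_nonneg (x-1), mul_nonneg (sq_nonneg (x-1)) h2]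
    exact this.ne'
  · -- θ² < 1/7, hence θ < 1 and E < 0
    have hθ1 : θ < 1 := by
      by_contra hge
      push_neg at hge
      nlinarith [mul_nonneg (mul_nonneg hθ.le (sub_nonneg.2 hge)) (by linarith : (0:ℝ) ≤ θ+1)]
    have hE : θ^4+2*θ^2-4*θ+1 < 0 := by
      have : θ^4+2*θ^2-4*θ+1 = (θ-1)*sosG θ := by unfold sosG; ring
      rw [this]
      exact mul_neg_of_neg_of_pos (by linarith) hg
    have hid : 4*θ^3*sosQ θ x
        = (2*θ^3*(x^2+1)+(3*θ^3-θ)*x)^2 - θ^2*(θ^4+2*θ^2-4*θ+1)*x^2 := by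
      unfold sosQ; ring
    have h4 : 0 < 4*θ^3*sosQ θ x := by
      rw [hid]
      have : 0 < - θ^2*(θ^4+2*θ^2-4*θ+1)*x^2 := by
        have h5 : 0 < θ^2*x^2 := by positivity
        nlinarith
      nlinarith [sq_nonneg (2*θ^3*(x^2+1)+(3*θ^3-θ)*x)]
    intro hQ
    rw [hQ] at h4; simp at h4

end Quartic

section QuarticRoots

variable {θ : ℝ}

/-- roots of the palindromic quadratic factor 2θ²x² - mx + 2θ² -/
lemma sos_quad_roots (hθ : 0 < θ) {m : ℝ} (hm : 4*θ^2 < m) :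
    ∃ a b : ℝ, b < a ∧ 0 < b ∧
      (∀ x : ℝ, 2*θ^2*x^2 - m*x + 2*θ^2 = 2*θ^2*(x-a)*(x-b)) := by
  have hθ2 : 0 < θ^2 := by positivity
  have hmpos : 0 < m := by nlinarith
  have hd : 0 < m^2 - 16*θ^4 := by nlinarith
  set w := Real.sqrt (m^2 - 16*θ^4) with hw
  have hw2 : w^2 = m^2 - 16*θ^4 := Real.sq_sqrt hd.le
  have hwpos : 0 < w := Real.sqrt_pos.2 hd
  have hwm : w < m := by nlinarith [hw2, hwpos]
  refine ⟨(m+w)/(4*θ^2), (m-w)/(4*θ^2), ?_, ?_, ?_⟩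
  · rw [div_lt_div_iff_of_pos_right (by positivity)]; linarith
  · exact div_pos (by linarith) (by positivity)
  · intro x
    field_simp
    linear_combination 2*hw2

lemma sosQset_card_two (hθ : 0 < θ) (hg : sosG θ = 0) :
    ∃ a b : ℝ, a ≠ b ∧ sosQset θ = {a, b} := by
  have hθ3 : θ < 0.3 := sosG_lt3 hg.le
  have hg' : θ^3+θ^2+3*θ-1 = 0 := hg
  have hm : 4*θ^2 < 1-3*θ^2 := by nlinarith
  obtain ⟨a, b, hba, hbpos, hfac⟩ := sos_quad_roots hθ hm
  have hQfact : ∀ x : ℝ, 4*θ*sosQ θ x = (2*θ^2*x^2 - (1-3*θ^2)*x + 2*θ^2)^2 := by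
    intro x
    unfold sosQ
    linear_combination (-(θ-1)*x^2) * hg'
  refine ⟨a, b, hba.ne', ?_⟩
  ext x
  simp only [sosQset, Set.mem_setOf_eq, Set.mem_insert_iff, Set.mem_singleton_iff]
  constructor
  · rintro ⟨hx, hQ⟩
    have h0 : (2*θ^2*x^2 - (1-3*θ^2)*x + 2*θ^2)^2 = 0 := by rw [← hQfact, hQ]; ring
    have h1 : 2*θ^2*(x-a)*(x-b) = 0 := by rw [← hfac]; exact pow_eq_zero_iff (n := 2) (by norm_num) |>.1 h0
    rcases mul_eq_zero.1 h1 with h | h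
    · rcases mul_eq_zero.1 h with h' | h'
      · exact absurd h' (by positivity)
      · left; linarith [sub_eq_zero.1 h']
    · right; linarith [sub_eq_zero.1 h]
  · have hroot : ∀ t, t = a ∨ t = b → 2*θ^2*t^2 - (1-3*θ^2)*t + 2*θ^2 = 0 := by
      rintro t (rfl | rfl) <;> rw [hfac] <;> ring
    rintro (h | h) <;> rw [h]
    · refine ⟨by linarith, ?_⟩
      have hq := hQfact a
      rw [hroot a (Or.inl rfl)] at hq
      have hq' : (4*θ) * sosQ θ a = 0 := by linear_combination hq
      exact (mul_eq_zero.1 hq').resolve_left (by positivity)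
    · refine ⟨hbpos, ?_⟩
      have hq := hQfact b
      rw [hroot b (Or.inr rfl)] at hq
      have hq' : (4*θ) * sosQ θ b = 0 := by linear_combination hq
      exact (mul_eq_zero.1 hq').resolve_left (by positivity)

end QuarticRoots

section QuarticFour

variable {θ : ℝ}

lemma sosQset_card_four (hθ : 0 < θ) (hg : sosG θ < 0) :
    ∃ a b c d : ℝ, (a ≠ b ∧ a ≠ c ∧ a ≠ d ∧ b ≠ c ∧ b ≠ d ∧ c ≠ d) ∧
      sosQset θ = {a, b, c, d} := by
  have hθ3 : θ < 0.3 := sosG_lt3 hg.le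
  have hg' : θ^3+θ^2+3*θ-1 < 0 := hg
  have hE : 0 < θ^4+2*θ^2-4*θ+1 := by nlinarith
  set sE := Real.sqrt (θ^4+2*θ^2-4*θ+1) with hsE
  have hsE2 : sE^2 = θ^4+2*θ^2-4*θ+1 := Real.sq_sqrt hE.le
  have hsEpos : 0 < sE := Real.sqrt_pos.2 hE
  have h7 : 7*θ^2 < 1 := by nlinarith
  have hsElt : sE < 1-7*θ^2 := by
    by_contra hc
    push_neg at hc
    nlinarith [hsE2, mul_pos hθ (sosQ_one_pos hθ), hsEpos]
  have hm2 : 4*θ^2 < 1-3*θ^2-sE := by linarith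
  have hm1 : 4*θ^2 < 1-3*θ^2+sE := by linarith
  obtain ⟨a, b, hba, hbpos, hfac1⟩ := sos_quad_roots hθ hm1
  obtain ⟨c, d, hdc, hdpos, hfac2⟩ := sos_quad_roots hθ hm2
  have hQfact : ∀ x : ℝ, 4*θ*sosQ θ x
      = (2*θ^2*x^2 - (1-3*θ^2+sE)*x + 2*θ^2) * (2*θ^2*x^2 - (1-3*θ^2-sE)*x + 2*θ^2) := by
    intro x
    unfold sosQ
    linear_combination (x^2)*hsE2
  -- no common roots of the two factors among positive reals
  have hsep : ∀ x : ℝ, 0 < x → 2*θ^2*x^2 - (1-3*θ^2+sE)*x + 2*θ^2 = 0 →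
      2*θ^2*x^2 - (1-3*θ^2-sE)*x + 2*θ^2 = 0 → False := by
    intro x hx h1 h2
    have : 2*sE*x = 0 := by linear_combination h2 - h1
    nlinarith [mul_pos (mul_pos (by norm_num : (0:ℝ) < 2) hsEpos) hx]
  have hapos : 0 < a := hbpos.trans hba
  have hcpos : 0 < c := hdpos.trans hdc
  have hroot1 : ∀ t, t = a ∨ t = b → 2*θ^2*t^2 - (1-3*θ^2+sE)*t + 2*θ^2 = 0 := by
    rintro t (rfl | rfl) <;> rw [hfac1] <;> ring
  have hroot2 : ∀ t, t = c ∨ t = d → 2*θ^2*t^2 - (1-3*θ^2-sE)*t + 2*θ^2 = 0 := by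
    rintro t (rfl | rfl) <;> rw [hfac2] <;> ring
  have hac : a ≠ c := fun h =>
    hsep a hapos (hroot1 a (Or.inl rfl)) (h ▸ hroot2 c (Or.inl rfl))
  have had : a ≠ d := fun h =>
    hsep a hapos (hroot1 a (Or.inl rfl)) (h ▸ hroot2 d (Or.inr rfl))
  have hbc : b ≠ c := fun h =>
    hsep b hbpos (hroot1 b (Or.inr rfl)) (h ▸ hroot2 c (Or.inl rfl))
  have hbd : b ≠ d := fun h =>
    hsep b hbpos (hroot1 b (Or.inr rfl)) (h ▸ hroot2 d (Or.inr rfl))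
  refine ⟨a, b, c, d, ⟨hba.ne', hac, had, hbc, hbd, hdc.ne'⟩, ?_⟩
  ext x
  simp only [sosQset, Set.mem_setOf_eq, Set.mem_insert_iff, Set.mem_singleton_iff]
  constructor
  · rintro ⟨hx, hQ⟩
    have h0 : (2*θ^2*x^2 - (1-3*θ^2+sE)*x + 2*θ^2) * (2*θ^2*x^2 - (1-3*θ^2-sE)*x + 2*θ^2) = 0 := by
      rw [← hQfact, hQ]; ring
    rcases mul_eq_zero.1 h0 with h | h
    · rw [hfac1] at h
      rcases mul_eq_zero.1 h with h' | h'
      · rcases mul_eq_zero.1 h' with h'' | h''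
        · exact absurd h'' (by positivity)
        · left; linarith [sub_eq_zero.1 h'']
      · right; left; linarith [sub_eq_zero.1 h']
    · rw [hfac2] at h
      rcases mul_eq_zero.1 h with h' | h'
      · rcases mul_eq_zero.1 h' with h'' | h''
        · exact absurd h'' (by positivity)
        · right; right; left; linarith [sub_eq_zero.1 h'']
      · right; right; right; linarith [sub_eq_zero.1 h']
  · have hQzero : ∀ t, (t = a ∨ t = b) ∨ (t = c ∨ t = d) → sosQ θ t = 0 := by
      intro t ht
      have hq := hQfact t
      rcases ht with h | h
      · rw [hroot1 t h] at hq
        have hq' : (4*θ) * sosQ θ t = 0 := by linear_combination hq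
        exact (mul_eq_zero.1 hq').resolve_left (by positivity)
      · rw [hroot2 t h] at hq
        have hq' : (4*θ) * sosQ θ t = 0 := by linear_combination hq
        exact (mul_eq_zero.1 hq').resolve_left (by positivity)
    rintro (h | h | h | h) <;> rw [h]
    · exact ⟨hapos, hQzero a (Or.inl (Or.inl rfl))⟩
    · exact ⟨hbpos, hQzero b (Or.inl (Or.inr rfl))⟩
    · exact ⟨hcpos, hQzero c (Or.inr (Or.inl rfl))⟩
    · exact ⟨hdpos, hQzero d (Or.inr (Or.inr rfl))⟩

end QuarticFour


lemma sosP_neg_small {θ : ℝ} (hθ : 0 < θ) (h : θ ≤ 0.1) : sosP θ < 0 := by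
  unfold sosP
  have e2 : θ^2 ≤ 0.01 := by nlinarith
  have e3 : θ^3 ≤ 0.001 := by nlinarith
  have e4 : θ^4 ≤ 0.0001 := by nlinarith
  have e5 : θ^5 ≤ 0.00001 := by nlinarith
  have e7 : θ^7 ≤ 0.0000001 := by nlinarith [pow_pos hθ 2, pow_pos hθ 5]
  have h1 : 4*θ^7+12*θ^5+71*θ^4+12*θ^3 ≤ 0.2*θ := by
    nlinarith [pow_pos hθ 2, pow_pos hθ 3, pow_pos hθ 4, pow_pos hθ 5, pow_pos hθ 7]
  nlinarith [sq_nonneg (38*θ - 6.1)]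

lemma sosP_mono {a b : ℝ} (h1 : 0.1 ≤ a) (hab : a < b) (h2 : b ≤ 0.2) : sosP a < sosP b := by
  have key : sosP b - sosP a = (b-a)*(4*(a^6+a^5*b+a^4*b^2+a^3*b^3+a^2*b^4+a*b^5+b^6)
      + 12*(a^4+a^3*b+a^2*b^2+a*b^3+b^4) + 71*(a^3+a^2*b+a*b^2+b^3)
      + 12*(a^2+a*b+b^2) - 38*(a+b) + 12) := by unfold sosP; ring
  have ha : 0 < a := by linarith
  have hb : 0 < b := by linarith
  have hbr : 0 < 4*(a^6+a^5*b+a^4*b^2+a^3*b^3+a^2*b^4+a*b^5+b^6)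
      + 12*(a^4+a^3*b+a^2*b^2+a*b^3+b^4) + 71*(a^3+a^2*b+a*b^2+b^3)
      + 12*(a^2+a*b+b^2) - 38*(a+b) + 12 := by
    nlinarith [mul_pos ha hb, sq_nonneg (a-b), sq_nonneg (a+b),
      mul_nonneg (mul_nonneg ha.le ha.le) hb.le, mul_nonneg (mul_nonneg ha.le hb.le) hb.le,
      mul_nonneg (sub_nonneg.2 h1) (sub_nonneg.2 (le_of_lt (hab.trans_le h2))),
      mul_nonneg (mul_nonneg (sub_nonneg.2 (show (0.1:ℝ) ≤ b by linarith)) (sub_nonneg.2 (show b ≤ 0.2 from h2))) hb.le,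
      mul_nonneg (sub_nonneg.2 h1) (sub_nonneg.2 (show a ≤ 0.2 by linarith)),
      mul_nonneg (sub_nonneg.2 (show (0.1:ℝ) ≤ b by linarith)) (sub_nonneg.2 h2),
      pow_pos ha 3, pow_pos hb 3, pow_pos ha 2, pow_pos hb 2]
  nlinarith [mul_pos (sub_pos.2 hab) hbr]

lemma sosP_pos_large {θ : ℝ} (h : 0.2 ≤ θ) : 0 < sosP θ := by
  unfold sosP
  have hθ : 0 < θ := by linarith
  rcases le_or_gt θ 1 with h1 | h1
  · nlinarith [pow_pos hθ 7, pow_pos hθ 5, sq_nonneg (θ - 0.29),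
      mul_nonneg (mul_nonneg (sub_nonneg.2 h) (sub_nonneg.2 h1)) (sq_nonneg (θ-0.29)),
      mul_nonneg (sub_nonneg.2 h) (sub_nonneg.2 h1),
      mul_nonneg (sub_nonneg.2 h) (sq_nonneg (θ-0.29)),
      mul_nonneg (sub_nonneg.2 h1) (sq_nonneg (θ-0.29))]
  · nlinarith [pow_pos hθ 7, pow_pos hθ 5, pow_pos hθ 3,
      mul_pos (mul_pos hθ hθ) (mul_pos hθ hθ), sq_nonneg (θ-1),
      mul_nonneg (sq_nonneg θ) (sq_nonneg (θ-1)), mul_pos hθ hθ]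

lemma sosP_141 : sosP 0.141 < 0 := by norm_num [sosP]
lemma sosP_142 : 0 < sosP 0.142 := by norm_num [sosP]

section Ncard

lemma sos_ncard3 {a b c : ℝ} (h1 : a ≠ b) (h2 : a ≠ c) (h3 : b ≠ c) :
    ({a, b, c} : Set ℝ).ncard = 3 := by
  rw [Set.ncard_insert_of_notMem (by simp [h1, h2]) (Set.toFinite _), Set.ncard_pair h3]

lemma sos_ncard4 {a b c d : ℝ} (h1 : a ≠ b) (h2 : a ≠ c) (h3 : a ≠ d) (h4 : b ≠ c)
    (h5 : b ≠ d) (h6 : c ≠ d) : ({a, b, c, d} : Set ℝ).ncard = 4 := by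
  rw [Set.ncard_insert_of_notMem (by simp [h1, h2, h3]) (Set.toFinite _), sos_ncard3 h4 h5 h6]

end Ncard

/-- With `θ_c'` the unique real root of `t³ + t² + 3t - 1 = 0`, there is
`θ_c ∈ (0.141, 0.142)` with `θ_c < θ_c'` such that the boundary-law system has exactly
1, 3, 5, 6, 7 positive solutions according as `θ > θ_c'`, `θ = θ_c'`, `θ_c < θ < θ_c'`,
`θ = θ_c`, `θ < θ_c`. -/
theorem sos_number_of_TISGMs (θc' : ℝ)
    (hroot : θc' ^ 3 + θc' ^ 2 + 3 * θc' - 1 = 0)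
    (huniq : ∀ t : ℝ, t ^ 3 + t ^ 2 + 3 * t - 1 = 0 → t = θc') :
    ∃ θc : ℝ, θc ∈ Set.Ioo (0.141 : ℝ) 0.142 ∧ θc < θc' ∧
      ∀ θ : ℝ, 0 < θ →
        (θc' < θ → (sosSolutionSet θ).ncard = 1) ∧
        (θ = θc' → (sosSolutionSet θ).ncard = 3) ∧
        (θc < θ → θ < θc' → (sosSolutionSet θ).ncard = 5) ∧
        (θ = θc → (sosSolutionSet θ).ncard = 6) ∧
        (θ < θc → (sosSolutionSet θ).ncard = 7) := by
  have hGroot : sosG θc' = 0 := hroot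
  have hθc'gt : (0.142:ℝ) < θc' := by
    by_contra hc
    push_neg at hc
    have h142 : sosG 0.142 < 0 := by norm_num [sosG]
    rcases eq_or_lt_of_le hc with h | h
    · rw [h] at hGroot; linarith
    · linarith [sosG_mono h, hGroot]
  have hθc'lt : θc' < 0.3 := sosG_lt3 hGroot.le
  have hgneg : ∀ t : ℝ, t < θc' → sosG t < 0 := fun t ht => hGroot ▸ sosG_mono ht
  have hgpos : ∀ t : ℝ, θc' < t → 0 < sosG t := fun t ht => hGroot ▸ sosG_mono ht
  have hPcont : Continuous sosP := by unfold sosP; fun_prop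
  have hIvt : (0:ℝ) ∈ sosP '' Set.Ioo 0.141 0.142 :=
    intermediate_value_Ioo (by norm_num) hPcont.continuousOn ⟨sosP_141, sosP_142⟩
  obtain ⟨θc, hθcIoo, hθcP⟩ := hIvt
  obtain ⟨hθc1, hθc2⟩ := hθcIoo
  have hPpos : ∀ t : ℝ, θc < t → 0 < sosP t := by
    intro t ht
    rcases le_or_gt t 0.2 with h | h
    · rw [← hθcP]; exact sosP_mono (by linarith) ht h
    · exact sosP_pos_large h.le
  have hPneg : ∀ t : ℝ, 0 < t → t < θc → sosP t < 0 := by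
    intro t ht htc
    rcases le_or_gt t 0.1 with h | h
    · exact sosP_neg_small ht h
    · rw [← hθcP]; exact sosP_mono h.le htc (by linarith)
  refine ⟨θc, ⟨hθc1, hθc2⟩, by linarith, ?_⟩
  intro θ hθ
  refine ⟨?_, ?_, ?_, ?_, ?_⟩
  · -- θ > θc' : one solution
    intro hgt
    obtain ⟨r, hC⟩ := sosCset_card_one hθ (hPpos θ (by linarith))
    have hQ := sosQset_empty hθ (hgpos θ hgt)
    rw [sos_ncard hθ (hC ▸ Set.finite_singleton r) (hQ ▸ Set.finite_empty), hC, hQ]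
    simp
  · -- θ = θc' : three solutions
    intro heq
    obtain ⟨r, hC⟩ := sosCset_card_one hθ (hPpos θ (by rw [heq]; linarith))
    obtain ⟨a, b, hab, hQ⟩ := sosQset_card_two hθ (by rw [heq]; exact hGroot)
    rw [sos_ncard hθ (hC ▸ Set.finite_singleton r) (hQ ▸ Set.toFinite _), hC, hQ,
      Set.ncard_singleton, Set.ncard_pair hab]
  · -- θc < θ < θc' : five solutions
    intro hgt hlt
    obtain ⟨r, hC⟩ := sosCset_card_one hθ (hPpos θ hgt)
    obtain ⟨a, b, c, d, ⟨h1, h2, h3, h4, h5, h6⟩, hQ⟩ := sosQset_card_four hθ (hgneg θ hlt)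
    rw [sos_ncard hθ (hC ▸ Set.finite_singleton r) (hQ ▸ Set.toFinite _), hC, hQ,
      Set.ncard_singleton, sos_ncard4 h1 h2 h3 h4 h5 h6]
  · -- θ = θc : six solutions
    intro heq
    obtain ⟨r1, r2, hr, hC⟩ := sosCset_card_two hθ (by rw [heq]; linarith) (by rw [heq]; exact hθcP)
    obtain ⟨a, b, c, d, ⟨h1, h2, h3, h4, h5, h6⟩, hQ⟩ := sosQset_card_four hθ (hgneg θ (by rw [heq]; linarith))
    rw [sos_ncard hθ (hC ▸ Set.toFinite _) (hQ ▸ Set.toFinite _), hC, hQ,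
      Set.ncard_pair hr, sos_ncard4 h1 h2 h3 h4 h5 h6]
  · -- θ < θc : seven solutions
    intro hlt
    obtain ⟨r1, r2, r3, hr1, hr2, hr3, hC⟩ := sosCset_card_three hθ (by linarith) (hPneg θ hθ hlt)
    obtain ⟨a, b, c, d, ⟨h1, h2, h3, h4, h5, h6⟩, hQ⟩ := sosQset_card_four hθ (hgneg θ (by linarith))
    rw [sos_ncard hθ (hC ▸ Set.toFinite _) (hQ ▸ Set.toFinite _), hC, hQ,
      sos_ncard3 hr1 hr2 hr3, sos_ncard4 h1 h2 h3 h4 h5 h6]
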